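/- Let λ = (n_0, …, n_d) be a partition with n_0 ≥ … ≥ n_d ≥ 1, set m_i = n_i + d − i, and fix a row index i with 0 ≤ i ≤ d. Then the product of the hook lengths of the cells in row i of λ satisfies (∏_{j=0}^{n_i−1} h(i,j)) · ∏_{j=i+1}^{d} (m_i − m_j) = m_i!. -/

import Mathlib

/-- The conjugate partition of `(n 0, …, n d)`: `conjLen j` is the number of indices `i`
with `n i > j`, i.e. the length of column `j`. -/
def conjLen (d : ℕ) (n : Fin (d + 1) → ℕ) (j : ℕ) : ℕ :=
  (Finset.univ.filter (fun i : Fin (d + 1) => j < n i)).card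

/-- The hook length of the cell `(i, j)` of the partition `λ = (n 0, …, n d)`:
`h(i,j) = (λ_i - j) + (λ'_j - i) - 1`. -/
def hookLen (d : ℕ) (n : Fin (d + 1) → ℕ) (i : Fin (d + 1)) (j : ℕ) : ℕ :=
  (n i - j) + (conjLen d n j - (i : ℕ)) - 1

/-- `conjLen d n j > k ↔ j < n k`, using monotonicity of `n`. -/
lemma conj_gt_iff {d : ℕ} {n : Fin (d + 1) → ℕ}
    (hmono : ∀ i j : Fin (d + 1), i ≤ j → n j ≤ n i) (j : ℕ) (k : Fin (d + 1)) :
    (k : ℕ) < conjLen d n j ↔ j < n k := by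
  unfold conjLen
  constructor
  · intro h
    by_contra hnk
    push_neg at hnk
    have hsub : (Finset.univ.filter (fun i : Fin (d + 1) => j < n i)) ⊆ Finset.Iio k := by
      intro x hx
      simp only [Finset.mem_filter] at hx
      rw [Finset.mem_Iio]
      by_contra hxk
      push_neg at hxk
      have : n x ≤ n k := hmono k x hxk
      omega
    have := Finset.card_le_card hsub
    rw [Fin.card_Iio] at this
    omega
  · intro h
    have hsub : Finset.Iic k ⊆ (Finset.univ.filter (fun i : Fin (d + 1) => j < n i)) := by
      intro x hx
      rw [Finset.mem_Iic] at hx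
      simp only [Finset.mem_filter, Finset.mem_univ, true_and]
      have : n k ≤ n x := hmono x k hx
      omega
    have := Finset.card_le_card hsub
    rw [Fin.card_Iic] at this
    omega

lemma conj_antitone {d : ℕ} {n : Fin (d + 1) → ℕ} (j j' : ℕ) (h : j ≤ j') :
    conjLen d n j' ≤ conjLen d n j := by
  apply Finset.card_le_card
  intro x hx
  simp only [Finset.mem_filter] at hx ⊢
  exact ⟨hx.1, by omega⟩

lemma conj_le {d : ℕ} {n : Fin (d + 1) → ℕ} (j : ℕ) : conjLen d n j ≤ d + 1 := by
  simpa [conjLen] using Finset.card_filter_le Finset.univ (fun i : Fin (d + 1) => j < n i)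

theorem statement11 (d : ℕ) (n : Fin (d + 1) → ℕ)
    (hmono : ∀ i j : Fin (d + 1), i ≤ j → n j ≤ n i) (hpos : ∀ i, 1 ≤ n i)
    (i : Fin (d + 1)) :
    (∏ j ∈ Finset.range (n i), (hookLen d n i j : ℤ)) *
        ∏ j ∈ Finset.univ.filter (fun j : Fin (d + 1) => i < j),
          (((n i + d - (i : ℕ) : ℕ) : ℤ) - ((n j + d - (j : ℕ) : ℕ) : ℤ))
      = (Nat.factorial (n i + d - (i : ℕ)) : ℤ) := by
  classical
  set M : ℕ := n i + d - (i : ℕ) with hM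
  set m : Fin (d + 1) → ℕ := fun k => n k + d - (k : ℕ) with hm
  have hmdef : ∀ k : Fin (d + 1), m k = n k + d - (k : ℕ) := fun _ => rfl
  have hid : (i : ℕ) ≤ d := by omega
  -- m is strictly antitone
  have hmlt : ∀ k l : Fin (d + 1), k < l → m l < m k := by
    intro k l hkl
    have h1 : n l ≤ n k := hmono k l (le_of_lt hkl)
    have h2 : (k : ℕ) < (l : ℕ) := hkl
    have h3 : (l : ℕ) ≤ d := by omega
    rw [hmdef k, hmdef l]
    omega
  have hmM : m i = M := rfl
  -- hooks are between 1 and M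
  have hconj : ∀ j, j < n i → (i : ℕ) < conjLen d n j := by
    intro j hj
    exact (conj_gt_iff hmono j i).mpr hj
  have hhook : ∀ j, j < n i →
      hookLen d n i j = (n i - j) + (conjLen d n j - (i : ℕ)) - 1 := fun _ _ => rfl
  have hhook_mem : ∀ j ∈ Finset.range (n i), hookLen d n i j ∈ Finset.Icc 1 M := by
    intro j hj
    rw [Finset.mem_range] at hj
    have h1 := hconj j hj
    have h2 := conj_le (n := n) j
    rw [Finset.mem_Icc, hhook j hj]
    omega
  -- hooks strictly antitone on range (n i)
  have hhook_anti : ∀ j j' : ℕ, j < j' → j' < n i →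
      hookLen d n i j' < hookLen d n i j := by
    intro j j' hjj hj'
    have hj : j < n i := by omega
    have h1 := hconj j hj
    have h1' := hconj j' hj'
    have h2 := conj_antitone (n := n) j j' (le_of_lt hjj)
    rw [hhook j hj, hhook j' hj']
    omega
  -- the two finsets
  set A : Finset ℕ := (Finset.range (n i)).image (hookLen d n i) with hA
  set B : Finset ℕ :=
    (Finset.univ.filter (fun j : Fin (d + 1) => i < j)).image (fun k => M - m k) with hB
  have hinjA : ∀ a ∈ Finset.range (n i), ∀ b ∈ Finset.range (n i),
      hookLen d n i a = hookLen d n i b → a = b := by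
    intro a ha b hb hab
    rw [Finset.mem_range] at ha hb
    by_contra hne
    rcases lt_or_gt_of_ne hne with h | h
    · exact absurd hab (ne_of_gt (hhook_anti a b h hb))
    · exact absurd hab.symm (ne_of_gt (hhook_anti b a h ha))
  have hinjB : ∀ a ∈ Finset.univ.filter (fun j : Fin (d + 1) => i < j),
      ∀ b ∈ Finset.univ.filter (fun j : Fin (d + 1) => i < j),
      M - m a = M - m b → a = b := by
    intro a ha b hb hab
    rw [Finset.mem_filter] at ha hb
    have hai := hmlt i a ha.2
    have hbi := hmlt i b hb.2
    rw [hmM] at hai hbi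
    by_contra hne
    rcases lt_or_gt_of_ne hne with h | h
    · have := hmlt a b h; omega
    · have := hmlt b a h; omega
  have hBmem : ∀ k ∈ Finset.univ.filter (fun j : Fin (d + 1) => i < j),
      M - m k ∈ Finset.Icc 1 M := by
    intro k hk
    rw [Finset.mem_filter] at hk
    have h1 := hmlt i k hk.2
    have h2 : (k : ℕ) ≤ d := by omega
    have h3 := hpos k
    have h4 := hmdef k
    rw [hmM] at h1
    rw [Finset.mem_Icc]
    omega
  -- disjointness
  have hdisj : Disjoint A B := by
    rw [Finset.disjoint_left]
    intro x hx hx'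
    simp only [hA, hB, Finset.mem_image, Finset.mem_range, Finset.mem_filter,
      Finset.mem_univ, true_and] at hx hx'
    obtain ⟨j, hj, hje⟩ := hx
    obtain ⟨k, hk, hke⟩ := hx'
    have h1 := hconj j hj
    have hik : (i : ℕ) < (k : ℕ) := hk
    have hkd : (k : ℕ) ≤ d := by omega
    have hnk : n k ≤ n i := hmono i k (le_of_lt hk)
    have hdich : ((k : ℕ) < conjLen d n j ∧ j < n k) ∨
        (conjLen d n j ≤ (k : ℕ) ∧ n k ≤ j) := by
      rcases lt_or_ge j (n k) with h | h
      · exact Or.inl ⟨(conj_gt_iff hmono j k).mpr h, h⟩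
      · right
        refine ⟨?_, h⟩
        by_contra hc
        push_neg at hc
        have := (conj_gt_iff hmono j k).mp hc
        omega
    rw [hhook j hj] at hje
    have hkeq : (n i + d - (i : ℕ)) - (n k + d - (k : ℕ)) = x := hke
    have hci := conj_le (n := n) j
    clear hke
    omega
  -- cardinalities
  have hcardA : A.card = n i := by
    rw [hA, Finset.card_image_of_injOn (fun a ha b hb hab => hinjA a ha b hb hab),
      Finset.card_range]
  have hfilter : (Finset.univ.filter (fun j : Fin (d + 1) => i < j)) = Finset.Ioi i := by
    ext x; simp
  have hcardB : B.card = d - (i : ℕ) := by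
    rw [hB, Finset.card_image_of_injOn (fun a ha b hb hab => hinjB a ha b hb hab),
      hfilter, Fin.card_Ioi]
    simp
  have hunion : A ∪ B = Finset.Icc 1 M := by
    apply Finset.eq_of_subset_of_card_le
    · intro x hx
      rcases Finset.mem_union.mp hx with h | h
      · obtain ⟨j, hj, hje⟩ := Finset.mem_image.mp h
        exact hje ▸ hhook_mem j hj
      · obtain ⟨k, hk, hke⟩ := Finset.mem_image.mp h
        exact hke ▸ hBmem k hk
    · rw [Nat.card_Icc, Finset.card_union_of_disjoint hdisj, hcardA, hcardB]
      omega
  -- products, in ℕ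
  have hPA : ∏ x ∈ A, x = ∏ j ∈ Finset.range (n i), hookLen d n i j :=
    Finset.prod_image hinjA
  have hPB : ∏ x ∈ B, x =
      ∏ k ∈ Finset.univ.filter (fun j : Fin (d + 1) => i < j), (M - m k) :=
    Finset.prod_image hinjB
  have hprod : (∏ j ∈ Finset.range (n i), hookLen d n i j) *
      (∏ k ∈ Finset.univ.filter (fun j : Fin (d + 1) => i < j), (M - m k)) =
      Nat.factorial M := by
    rw [← hPA, ← hPB, ← Finset.prod_union hdisj, hunion, ← Finset.Ico_add_one_right_eq_Icc]
    exact Finset.prod_Ico_id_eq_factorial M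
  -- cast to ℤ
  have hcast : ∀ k ∈ Finset.univ.filter (fun j : Fin (d + 1) => i < j),
      ((M : ℤ) - ((n k + d - (k : ℕ) : ℕ) : ℤ)) = ((M - m k : ℕ) : ℤ) := by
    intro k hk
    rw [Finset.mem_filter] at hk
    have h1 := hmlt i k hk.2
    rw [hmM] at h1
    exact (Nat.cast_sub (le_of_lt h1)).symm
  calc (∏ j ∈ Finset.range (n i), (hookLen d n i j : ℤ)) *
        ∏ k ∈ Finset.univ.filter (fun j : Fin (d + 1) => i < j),
          ((M : ℤ) - ((n k + d - (k : ℕ) : ℕ) : ℤ))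
      = (∏ j ∈ Finset.range (n i), (hookLen d n i j : ℤ)) *
        ∏ k ∈ Finset.univ.filter (fun j : Fin (d + 1) => i < j),
          (((M - m k : ℕ) : ℤ)) := by
        rw [Finset.prod_congr rfl hcast]
    _ = ((Nat.factorial M : ℕ) : ℤ) := by
        rw [← Nat.cast_prod, ← Nat.cast_prod, ← Nat.cast_mul, hprod]
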